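/- Let t be uniformly distributed on [−1/2, 1/2] and R ≥ 1. Then 𝔼[R² sin²(t/R)] − 𝔼[R²(1 − cos(t/R))²] = R³(−1/R − sin(1/R) + 4 sin(1/(2R))) and this quantity is at least 0.07. -/

import Mathlib

open MeasureTheory

private lemma sin_lb {x : ℝ} (hx : 0 ≤ x) : x - x ^ 3 / 6 ≤ Real.sin x := by
  have hd : ∀ y : ℝ, HasDerivAt (fun t => Real.sin t - t + t ^ 3 / 6)
      (Real.cos y - 1 + y ^ 2 / 2) y := by
    intro y
    have h1 := (Real.hasDerivAt_sin y).sub (hasDerivAt_id y)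
    have h2 : HasDerivAt (fun t : ℝ => t ^ 3 / 6) (y ^ 2 / 2) y := by
      have := (hasDerivAt_pow 3 y).div_const 6
      refine this.congr_deriv ?_
      ring
    exact h1.add h2
  have mono : MonotoneOn (fun t => Real.sin t - t + t ^ 3 / 6) (Set.Ici (0:ℝ)) := by
    apply monotoneOn_of_deriv_nonneg (convex_Ici 0)
    · exact Continuous.continuousOn (by fun_prop)
    · intro y hy
      exact (hd y).differentiableAt.differentiableWithinAt
    · intro y hy
      rw [(hd y).deriv]
      nlinarith [Real.one_sub_sq_div_two_le_cos (x := y)]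
  have := mono (Set.self_mem_Ici) (Set.mem_Ici.2 hx) hx
  simp at this
  linarith

private lemma cos_ub {x : ℝ} (hx : 0 ≤ x) : Real.cos x ≤ 1 - x ^ 2 / 2 + x ^ 4 / 24 := by
  have hd : ∀ y : ℝ, HasDerivAt (fun t => 1 - t ^ 2 / 2 + t ^ 4 / 24 - Real.cos t)
      (-y + y ^ 3 / 6 + Real.sin y) y := by
    intro y
    have h2 : HasDerivAt (fun t : ℝ => 1 - t ^ 2 / 2) (-y) y := by
      have := ((hasDerivAt_pow 2 y).div_const 2).const_sub 1
      refine this.congr_deriv ?_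
      ring
    have h3 : HasDerivAt (fun t : ℝ => t ^ 4 / 24) (y ^ 3 / 6) y := by
      have := (hasDerivAt_pow 4 y).div_const 24
      refine this.congr_deriv ?_
      ring
    have := (h2.add h3).sub (Real.hasDerivAt_cos y)
    refine this.congr_deriv ?_
    ring
  have mono : MonotoneOn (fun t => 1 - t ^ 2 / 2 + t ^ 4 / 24 - Real.cos t) (Set.Ici (0:ℝ)) := by
    apply monotoneOn_of_deriv_nonneg (convex_Ici 0)
    · exact Continuous.continuousOn (by fun_prop)
    · intro y hy
      exact (hd y).differentiableAt.differentiableWithinAt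
    · intro y hy
      rw [(hd y).deriv]
      have hy0 : (0:ℝ) ≤ y := le_of_lt (by simpa using hy)
      have := sin_lb hy0
      linarith
  have := mono (Set.self_mem_Ici) (Set.mem_Ici.2 hx) hx
  simp at this
  linarith

private lemma sin_ub {x : ℝ} (hx : 0 ≤ x) : Real.sin x ≤ x - x ^ 3 / 6 + x ^ 5 / 120 := by
  have hd : ∀ y : ℝ, HasDerivAt (fun t => t - t ^ 3 / 6 + t ^ 5 / 120 - Real.sin t)
      (1 - y ^ 2 / 2 + y ^ 4 / 24 - Real.cos y) y := by
    intro y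
    have h1 : HasDerivAt (fun t : ℝ => t - t ^ 3 / 6) (1 - y ^ 2 / 2) y := by
      have := (hasDerivAt_id y).sub ((hasDerivAt_pow 3 y).div_const 6)
      refine this.congr_deriv ?_
      ring
    have h2 : HasDerivAt (fun t : ℝ => t ^ 5 / 120) (y ^ 4 / 24) y := by
      have := (hasDerivAt_pow 5 y).div_const 120
      refine this.congr_deriv ?_
      ring
    exact (h1.add h2).sub (Real.hasDerivAt_sin y)
  have mono : MonotoneOn (fun t => t - t ^ 3 / 6 + t ^ 5 / 120 - Real.sin t) (Set.Ici (0:ℝ)) := by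
    apply monotoneOn_of_deriv_nonneg (convex_Ici 0)
    · exact Continuous.continuousOn (by fun_prop)
    · intro y hy
      exact (hd y).differentiableAt.differentiableWithinAt
    · intro y hy
      rw [(hd y).deriv]
      have hy0 : (0:ℝ) ≤ y := le_of_lt (by simpa using hy)
      have := cos_ub hy0
      linarith
  have := mono (Set.self_mem_Ici) (Set.mem_Ici.2 hx) hx
  simp at this
  linarith

/-- For t uniform on [−1/2,1/2] and R ≥ 1,
𝔼[R² sin²(t/R)] − 𝔼[R²(1 − cos(t/R))²] = R³(−1/R − sin(1/R) + 4 sin(1/(2R))) ≥ 0.07. -/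
theorem eigenvalue_gap_bending (R : ℝ) (hR : 1 ≤ R) :
    (∫ t in Set.Icc (-(1 : ℝ) / 2) (1 / 2), R ^ 2 * Real.sin (t / R) ^ 2)
        - (∫ t in Set.Icc (-(1 : ℝ) / 2) (1 / 2), R ^ 2 * (1 - Real.cos (t / R)) ^ 2)
      = R ^ 3 * (-(1 / R) - Real.sin (1 / R) + 4 * Real.sin (1 / (2 * R)))
    ∧ (0.07 : ℝ) ≤ R ^ 3 * (-(1 / R) - Real.sin (1 / R) + 4 * Real.sin (1 / (2 * R))) := by
  have hR0 : (0:ℝ) < R := lt_of_lt_of_le one_pos hR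
  have hRne : R ≠ 0 := ne_of_gt hR0
  constructor
  · -- the integral identity
    have hdiv : ∀ x : ℝ, HasDerivAt (fun t : ℝ => t / R) (1 / R) x := by
      intro x
      simpa using (hasDerivAt_id x).div_const R
    have hsin : ∀ x : ℝ, HasDerivAt (fun t : ℝ => Real.sin (t / R))
        (Real.cos (x / R) * (1 / R)) x := fun x => by have := (Real.hasDerivAt_sin (x / R)).comp x (hdiv x); exact this
    have hcos : ∀ x : ℝ, HasDerivAt (fun t : ℝ => Real.cos (t / R))
        (-Real.sin (x / R) * (1 / R)) x := fun x => by have := (Real.hasDerivAt_cos (x / R)).comp x (hdiv x); exact this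
    have hG : ∀ x : ℝ, HasDerivAt
        (fun t : ℝ => R ^ 2 / 2 * t - R ^ 3 / 2 * (Real.sin (t / R) * Real.cos (t / R)))
        (R ^ 2 * Real.sin (x / R) ^ 2) x := by
      intro x
      have h1 : HasDerivAt (fun t : ℝ => R ^ 2 / 2 * t) (R ^ 2 / 2) x := by
        simpa using (hasDerivAt_id x).const_mul (R ^ 2 / 2)
      have h2 := ((hsin x).mul (hcos x)).const_mul (R ^ 3 / 2)
      have h := h1.sub h2
      refine h.congr_deriv ?_
      have pyth := Real.sin_sq_add_cos_sq (x / R)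
      field_simp
      linear_combination (-1 : ℝ) * pyth
    have hH : ∀ x : ℝ, HasDerivAt
        (fun t : ℝ => 3 * R ^ 2 / 2 * t - 2 * R ^ 3 * Real.sin (t / R)
          + R ^ 3 / 2 * (Real.sin (t / R) * Real.cos (t / R)))
        (R ^ 2 * (1 - Real.cos (x / R)) ^ 2) x := by
      intro x
      have h1 : HasDerivAt (fun t : ℝ => 3 * R ^ 2 / 2 * t) (3 * R ^ 2 / 2) x := by
        simpa using (hasDerivAt_id x).const_mul (3 * R ^ 2 / 2)
      have h2 := (hsin x).const_mul (2 * R ^ 3)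
      have h3 := ((hsin x).mul (hcos x)).const_mul (R ^ 3 / 2)
      have h := (h1.sub h2).add h3
      refine h.congr_deriv ?_
      have pyth := Real.sin_sq_add_cos_sq (x / R)
      field_simp
      linear_combination (-1 : ℝ) * pyth
    have hab : (-(1:ℝ)/2) ≤ 1/2 := by norm_num
    have hint1 : IntervalIntegrable (fun t : ℝ => R ^ 2 * Real.sin (t / R) ^ 2)
        volume (-(1:ℝ)/2) (1/2) := (Continuous.intervalIntegrable (by fun_prop) _ _)
    have hint2 : IntervalIntegrable (fun t : ℝ => R ^ 2 * (1 - Real.cos (t / R)) ^ 2)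
        volume (-(1:ℝ)/2) (1/2) := (Continuous.intervalIntegrable (by fun_prop) _ _)
    have e1 : (∫ t in Set.Icc (-(1 : ℝ) / 2) (1 / 2), R ^ 2 * Real.sin (t / R) ^ 2)
        = ∫ t in (-(1:ℝ)/2)..(1/2), R ^ 2 * Real.sin (t / R) ^ 2 := by
      rw [intervalIntegral.integral_of_le hab, integral_Icc_eq_integral_Ioc]
    have e2 : (∫ t in Set.Icc (-(1 : ℝ) / 2) (1 / 2), R ^ 2 * (1 - Real.cos (t / R)) ^ 2)
        = ∫ t in (-(1:ℝ)/2)..(1/2), R ^ 2 * (1 - Real.cos (t / R)) ^ 2 := by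
      rw [intervalIntegral.integral_of_le hab, integral_Icc_eq_integral_Ioc]
    rw [e1, e2,
      intervalIntegral.integral_eq_sub_of_hasDerivAt (fun x _ => hG x) hint1,
      intervalIntegral.integral_eq_sub_of_hasDerivAt (fun x _ => hH x) hint2]
    have ha : (-(1:ℝ)/2) / R = -(1/(2*R)) := by ring
    have hb : ((1:ℝ)/2) / R = 1/(2*R) := by ring
    rw [ha, hb, Real.sin_neg, Real.cos_neg]
    have h2u : Real.sin (1/R) = 2 * Real.sin (1/(2*R)) * Real.cos (1/(2*R)) := by
      rw [show (1:ℝ)/R = 2 * (1/(2*R)) by field_simp, Real.sin_two_mul]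
    rw [h2u]
    field_simp
    ring
  · -- the lower bound
    set s : ℝ := 1 / R with hs
    have hs0 : 0 < s := by positivity
    have hs1 : s ≤ 1 := by rw [hs]; exact div_le_one_of_le₀ hR (le_of_lt hR0)
    have hRs : R * s = 1 := by rw [hs]; field_simp
    have h2R : 1 / (2 * R) = s / 2 := by rw [hs]; ring
    rw [h2R]
    have husin := sin_ub (le_of_lt hs0)
    have hlsin := sin_lb (x := s / 2) (by linarith)
    have key : s ^ 3 / 12 - s ^ 5 / 120 ≤ -s - Real.sin s + 4 * Real.sin (s / 2) := by
      nlinarith [husin, hlsin]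
    have hR3 : (0:ℝ) < R ^ 3 := by positivity
    have step : R ^ 3 * (s ^ 3 / 12 - s ^ 5 / 120)
        ≤ R ^ 3 * (-s - Real.sin s + 4 * Real.sin (s / 2)) := by
      exact mul_le_mul_of_nonneg_left key (le_of_lt hR3)
    have val : R ^ 3 * (s ^ 3 / 12 - s ^ 5 / 120) = 1 / 12 - s ^ 2 / 120 := by
      have h3 : R ^ 3 * s ^ 3 = 1 := by
        rw [← mul_pow, hRs]; norm_num
      linear_combination (1 / 12 - s ^ 2 / 120) * h3
    have : (0.07 : ℝ) ≤ 1 / 12 - s ^ 2 / 120 := by nlinarith [hs1, hs0]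
    calc (0.07 : ℝ) ≤ 1 / 12 - s ^ 2 / 120 := this
      _ = R ^ 3 * (s ^ 3 / 12 - s ^ 5 / 120) := val.symm
      _ ≤ R ^ 3 * (-s - Real.sin s + 4 * Real.sin (s / 2)) := step
      _ = R ^ 3 * (-(1/R) - Real.sin (1/R) + 4 * Real.sin (s / 2)) := by rw [hs]
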